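/- arXiv:2505.10547 — 5 statements merged into one kernel-verified Lean document; each statement's English description precedes it below -/
import Mathlib

section
/- Let E be a real inner product space, let o, a, c ∈ E, and let r, R ≥ 0 be real numbers. If ‖a − o‖ ≥ R, ‖c − o‖ ≥ R, and (‖a − c‖/2)² + r² ≤ R², then every point on the closed segment from a to c is at distance at least r from o; that is, for every t ∈ [0,1], ‖((1 − t) • a + t • c) − o‖ ≥ r. -/
/-- If two points `a` and `c` both keep distance at least `R` from a center `o`,
and `(‖a - c‖ / 2)² + r² ≤ R²`, then every point on the closed segment from `a`
to `c` keeps distance at least `r` from `o`. -/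
theorem segment_dist_ge_of_endpoints_far
    {E : Type*} [NormedAddCommGroup E] [InnerProductSpace ℝ E]
    (o a c : E) (r R : ℝ) (hr : 0 ≤ r) (hR : 0 ≤ R)
    (ha : R ≤ ‖a - o‖) (hc : R ≤ ‖c - o‖)
    (hstep : (‖a - c‖ / 2) ^ 2 + r ^ 2 ≤ R ^ 2) :
    ∀ t : ℝ, t ∈ Set.Icc (0 : ℝ) 1 → r ≤ ‖((1 - t) • a + t • c) - o‖ := by
  intro t ht
  obtain ⟨ht0, ht1⟩ := ht
  set u := a - o with hu
  set v := c - o with hv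
  have hx : ((1 - t) • a + t • c) - o = (1 - t) • u + t • v := by
    rw [hu, hv]; module
  have huv : a - c = u - v := by rw [hu, hv]; abel
  rw [hx]
  have h1 : ‖(1 - t) • u + t • v‖ ^ 2
      = (1 - t) ^ 2 * ‖u‖ ^ 2 + 2 * ((1 - t) * t) * inner ℝ u v + t ^ 2 * ‖v‖ ^ 2 := by
    rw [@norm_add_sq_real, norm_smul, norm_smul, real_inner_smul_left,
      real_inner_smul_right]
    have h0 : ‖(1:ℝ) - t‖ = 1 - t := Real.norm_of_nonneg (by linarith)
    have h0' : ‖t‖ = t := Real.norm_of_nonneg ht0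
    rw [h0, h0']; ring
  have h2 : ‖u - v‖ ^ 2 = ‖u‖ ^ 2 - 2 * inner ℝ u v + ‖v‖ ^ 2 :=
    norm_sub_sq_real u v
  rw [huv] at hstep
  have hu2 : R ^ 2 ≤ ‖u‖ ^ 2 := by nlinarith
  have hv2 : R ^ 2 ≤ ‖v‖ ^ 2 := by nlinarith
  nlinarith [norm_nonneg ((1 - t) • u + t • v), sq_nonneg (1 - 2*t),
    mul_nonneg (mul_nonneg ht0 (by linarith : (0:ℝ) ≤ 1 - t)) (norm_nonneg (u - v))]
end

section
/- Let E be a real inner product space, let o, a, c ∈ E, let l ≥ 0 and 0 < η < η' be real numbers. If ‖a − o‖ ≥ l + η', ‖c − o‖ ≥ l + η', and ‖a − c‖ < 2·√((η' − η)² + 2·(l + η)·(η' − η)), then every point on the closed segment from a to c is at distance strictly greater than l + η from o; that is, for every t ∈ [0,1], ‖((1 − t) • a + t • c) − o‖ > l + η. -/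
/-- If two consecutive waypoints `a` and `c` both keep distance at least `l + η'`
from a center `o`, and `‖a - c‖ < 2·√((η' − η)² + 2·(l + η)·(η' − η))`, then every
point on the closed segment from `a` to `c` is at distance strictly greater than
`l + η` from `o`. -/
theorem segment_dist_gt_of_step_small
    {E : Type*} [NormedAddCommGroup E] [InnerProductSpace ℝ E]
    (o a c : E) (l η η' : ℝ) (hl : 0 ≤ l) (hη : 0 < η) (hηη' : η < η')
    (ha : l + η' ≤ ‖a - o‖) (hc : l + η' ≤ ‖c - o‖)
    (hstep : ‖a - c‖ < 2 * Real.sqrt ((η' - η) ^ 2 + 2 * (l + η) * (η' - η))) :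
    ∀ t : ℝ, t ∈ Set.Icc (0 : ℝ) 1 → l + η < ‖((1 - t) • a + t • c) - o‖ := by
  intro t ht
  obtain ⟨ht0, ht1⟩ := ht
  set D : ℝ := (η' - η) ^ 2 + 2 * (l + η) * (η' - η) with hDdef
  have hD0 : 0 ≤ D := by nlinarith
  have hsq : Real.sqrt D ^ 2 = D := Real.sq_sqrt hD0
  have hac : ‖a - c‖ ^ 2 < 4 * D := by
    have h0 : 0 ≤ ‖a - c‖ := norm_nonneg _
    have hs0 : 0 ≤ Real.sqrt D := Real.sqrt_nonneg _
    nlinarith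
  set x := a - o with hx
  set y := c - o with hy
  have hp : ((1 - t) • a + t • c) - o = (1 - t) • x + t • y := by
    rw [hx, hy]
    module
  rw [hp]
  have e1 : ‖(1 - t) • x + t • y‖ ^ 2 =
      (1 - t) ^ 2 * ‖x‖ ^ 2 + 2 * ((1 - t) * t) * (inner ℝ x y : ℝ) + t ^ 2 * ‖y‖ ^ 2 := by
    rw [← real_inner_self_eq_norm_sq]
    simp only [inner_add_left, inner_add_right, real_inner_smul_left, real_inner_smul_right]
    rw [real_inner_comm y x, real_inner_self_eq_norm_sq, real_inner_self_eq_norm_sq]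
    ring
  have e2 : ‖x - y‖ ^ 2 = ‖x‖ ^ 2 - 2 * (inner ℝ x y : ℝ) + ‖y‖ ^ 2 := by
    rw [← real_inner_self_eq_norm_sq]
    simp only [inner_sub_left, inner_sub_right]
    rw [real_inner_comm y x, real_inner_self_eq_norm_sq, real_inner_self_eq_norm_sq]
    ring
  have hxy : x - y = a - c := by rw [hx, hy]; abel
  have hx2 : (l + η') ^ 2 ≤ ‖x‖ ^ 2 := by nlinarith [norm_nonneg x]
  have hy2 : (l + η') ^ 2 ≤ ‖y‖ ^ 2 := by nlinarith [norm_nonneg y]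
  have hkey : (l + η) ^ 2 < ‖(1 - t) • x + t • y‖ ^ 2 := by
    rw [hxy] at e2
    have htt : t * (1 - t) ≤ 1 / 4 := by nlinarith [sq_nonneg (t - 1/2)]
    nlinarith [hac, hx2, hy2, mul_nonneg ht0 (by linarith : (0:ℝ) ≤ 1 - t)]
  exact lt_of_pow_lt_pow_left₀ 2 (norm_nonneg _) hkey
end

section
/- Let E be a real inner product space, let o, a, c ∈ E, let l ≥ 0 and 0 < η < η' be real numbers. Suppose ‖a − o‖ ≥ l + η', ‖c − o‖ ≥ l + η', and ‖a − c‖ < 2·√((η' − η)² + 2·(l + η)·(η' − η)). Then every point within distance η of the closed segment from a to c stays strictly farther than l from o; that is, for every x ∈ E and every t ∈ [0,1], if ‖x − ((1 − t) • a + t • c)‖ ≤ η then ‖x − o‖ > l. -/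
/-- If two consecutive waypoints `a` and `c` both keep distance at least `l + η'`
from a center `o`, and `‖a - c‖ < 2·√((η' − η)² + 2·(l + η)·(η' − η))`, then every
point within distance `η` of the closed segment from `a` to `c` stays strictly
farther than `l` from `o`. -/
theorem tracked_segment_dist_gt
    {E : Type*} [NormedAddCommGroup E] [InnerProductSpace ℝ E]
    (o a c : E) (l η η' : ℝ) (hl : 0 ≤ l) (hη : 0 < η) (hηη' : η < η')
    (ha : l + η' ≤ ‖a - o‖) (hc : l + η' ≤ ‖c - o‖)
    (hstep : ‖a - c‖ < 2 * Real.sqrt ((η' - η) ^ 2 + 2 * (l + η) * (η' - η))) :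
    ∀ x : E, ∀ t : ℝ, t ∈ Set.Icc (0 : ℝ) 1 →
      ‖x - ((1 - t) • a + t • c)‖ ≤ η → l < ‖x - o‖ := by
  intro x t ht hx
  obtain ⟨ht0, ht1⟩ := ht
  set u := a - o with hu
  set v := c - o with hv
  have hD : 0 < (η' - η) ^ 2 + 2 * (l + η) * (η' - η) := by nlinarith
  have hsq : ‖a - c‖ ^ 2 < 4 * ((η' - η) ^ 2 + 2 * (l + η) * (η' - η)) := by
    nlinarith [Real.sq_sqrt hD.le, Real.sqrt_nonneg ((η' - η) ^ 2 + 2 * (l + η) * (η' - η)),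
      norm_nonneg (a - c)]
  have huv : a - c = u - v := by rw [hu, hv]; abel
  have hp : (1 - t) • a + t • c - o = (1 - t) • u + t • v := by
    rw [hu, hv]; module
  have key : ‖(1 - t) • u + t • v‖ ^ 2
      = (1 - t) * ‖u‖ ^ 2 + t * ‖v‖ ^ 2 - t * (1 - t) * ‖u - v‖ ^ 2 := by
    have h1 := real_inner_self_eq_norm_sq ((1 - t) • u + t • v)
    have h2 := real_inner_self_eq_norm_sq (u - v)
    have h3 := real_inner_self_eq_norm_sq u
    have h4 := real_inner_self_eq_norm_sq v
    simp only [inner_add_add_self, inner_sub_sub_self, real_inner_smul_left,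
      real_inner_smul_right] at h1 h2
    linear_combination (-1) * h1 - t * (1 - t) * h2 + (1 - t) * h3 + t * h4
  have hmid : (l + η) ^ 2 < ‖(1 - t) • u + t • v‖ ^ 2 := by
    rw [key, ← huv]
    have h1 : (l + η') ^ 2 ≤ ‖u‖ ^ 2 := by
      have : 0 ≤ l + η' := by linarith
      nlinarith [ha]
    have h2 : (l + η') ^ 2 ≤ ‖v‖ ^ 2 := by
      have : 0 ≤ l + η' := by linarith
      nlinarith [hc]
    nlinarith [mul_nonneg ht0 (by linarith : (0:ℝ) ≤ 1 - t), sq_nonneg ‖a - c‖,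
      mul_nonneg (sq_nonneg (1 - 2 * t)) (sq_nonneg ‖a - c‖), h1, h2, hsq, ht0, ht1]
  have hgt : l + η < ‖(1 - t) • a + t • c - o‖ := by
    rw [hp]
    refine lt_of_pow_lt_pow_left₀ 2 (norm_nonneg _) hmid
  have htri : ‖(1 - t) • a + t • c - o‖ - ‖x - o‖ ≤ η := by
    calc ‖(1 - t) • a + t • c - o‖ - ‖x - o‖
        ≤ ‖((1 - t) • a + t • c - o) - (x - o)‖ := norm_sub_norm_le _ _
      _ = ‖x - ((1 - t) • a + t • c)‖ := by rw [← norm_neg]; congr 1; abel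
      _ ≤ η := hx
  linarith
end

section
/- Let E be a real inner product space, let k ≥ 1 and M ≥ 1 be natural numbers, let x̂_1, …, x̂_k ∈ E be waypoints, let o_1, …, o_M ∈ E be obstacle centers with clearance radii l_1, …, l_M ≥ 0, let 0 < η < η' be real numbers, and let Δx > 0. Suppose: (i) ‖x̂_{j+1} − x̂_j‖ ≤ Δx for every j ∈ {1, …, k−1}; (ii) ‖x̂_j − o_h‖ ≥ l_h + η' for every j ∈ {1, …, k} and every h ∈ {1, …, M}; and (iii) Δx < 2·√((η' − η)² + 2·(l_h + η)·(η' − η)) for every h ∈ {1, …, M}. Then every point within distance η of the polyline through x̂_1, …, x̂_k stays strictly farther than l_h from every obstacle center; that is, for every x ∈ E, every j ∈ {1, …, k−1}, and every t ∈ [0,1], if ‖x − ((1 − t) • x̂_j + t • x̂_{j+1})‖ ≤ η then ‖x − o_h‖ > l_h for all h ∈ {1, …, M}. -/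
lemma seg_norm_sq_aux {E : Type*} [NormedAddCommGroup E] [InnerProductSpace ℝ E]
    (u v : E) (t : ℝ) :
    ‖(1 - t) • u + t • v‖ ^ 2
      = (1 - t) * ‖u‖ ^ 2 + t * ‖v‖ ^ 2 - t * (1 - t) * ‖v - u‖ ^ 2 := by
  have h := real_inner_self_eq_norm_sq ((1 - t) • u + t • v)
  have h2 := real_inner_self_eq_norm_sq (v - u)
  have hu := real_inner_self_eq_norm_sq u
  have hv := real_inner_self_eq_norm_sq v
  simp only [inner_add_add_self, inner_sub_sub_self, real_inner_smul_left,
    real_inner_smul_right] at h h2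
  rw [← h]
  linear_combination (1 - t) * hu + t * hv - (t * (1 - t)) * h2

set_option maxHeartbeats 2000000 in
lemma arith_aux (lh η η' Δx A B L P t : ℝ)
    (hlh : 0 ≤ lh) (hη : 0 < η) (hηη' : η < η') (hΔx : 0 < Δx)
    (hA : lh + η' ≤ A) (hB : lh + η' ≤ B) (hLnn : 0 ≤ L) (hLΔ : L ≤ Δx)
    (hP : 0 ≤ P)
    (hbound : Δx < 2 * Real.sqrt ((η' - η) ^ 2 + 2 * (lh + η) * (η' - η)))
    (ht0 : 0 ≤ t) (ht1 : t ≤ 1)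
    (hkey : P ^ 2 = (1 - t) * A ^ 2 + t * B ^ 2 - t * (1 - t) * L ^ 2) :
    lh + η < P := by
  have hin : (0:ℝ) ≤ (η' - η) ^ 2 + 2 * (lh + η) * (η' - η) := by nlinarith
  have hs := Real.sq_sqrt hin
  have hsn := Real.sqrt_nonneg ((η' - η) ^ 2 + 2 * (lh + η) * (η' - η))
  have hΔsq : Δx ^ 2 < 4 * ((η' - η) ^ 2 + 2 * (lh + η) * (η' - η)) := by nlinarith
  have hAnn : (0:ℝ) ≤ A := by nlinarith
  have hBnn : (0:ℝ) ≤ B := by nlinarith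
  have h1 : (lh + η') ^ 2 ≤ A ^ 2 := pow_le_pow_left₀ (by linarith) hA 2
  have h2 : (lh + η') ^ 2 ≤ B ^ 2 := pow_le_pow_left₀ (by linarith) hB 2
  have hLsq : L ^ 2 ≤ Δx ^ 2 := pow_le_pow_left₀ hLnn hLΔ 2
  have htt : t * (1 - t) ≤ 1 / 4 := by
    have e : t * (1 - t) = 1 / 4 - (2 * t - 1) ^ 2 / 4 := by ring
    linarith [sq_nonneg (2 * t - 1)]
  have h1t : (0:ℝ) ≤ 1 - t := by linarith
  have hconv : (lh + η') ^ 2 ≤ (1 - t) * A ^ 2 + t * B ^ 2 := by nlinarith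
  have hterm : t * (1 - t) * L ^ 2 ≤ Δx ^ 2 / 4 := by
    have e1 : t * (1 - t) * L ^ 2 ≤ (1 / 4) * L ^ 2 :=
      mul_le_mul_of_nonneg_right htt (sq_nonneg _)
    nlinarith
  have hpsq : (lh + η) ^ 2 < P ^ 2 := by nlinarith
  nlinarith

/-- Safety half of the paper's Theorem: a planned polyline whose waypoints keep
the inflated clearance `l h + η'` from every obstacle center, with step size `Δx`
bounded by the paper's bound, yields that every point within tracking error `η`
of the polyline stays strictly farther than `l h` from every obstacle center. -/
theorem tracked_polyline_avoids_all_obstacles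
    {E : Type*} [NormedAddCommGroup E] [InnerProductSpace ℝ E]
    (k M : ℕ) (hk : 1 ≤ k) (hM : 1 ≤ M)
    (xh : Fin k → E) (o : Fin M → E) (l : Fin M → ℝ) (hl : ∀ h, 0 ≤ l h)
    (η η' Δx : ℝ) (hη : 0 < η) (hηη' : η < η') (hΔx : 0 < Δx)
    (hstep : ∀ (j : ℕ) (hj : j + 1 < k),
      ‖xh ⟨j + 1, hj⟩ - xh ⟨j, Nat.lt_of_succ_lt hj⟩‖ ≤ Δx)
    (hclear : ∀ (j : Fin k) (h : Fin M), l h + η' ≤ ‖xh j - o h‖)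
    (hbound : ∀ h : Fin M,
      Δx < 2 * Real.sqrt ((η' - η) ^ 2 + 2 * (l h + η) * (η' - η))) :
    ∀ (x : E) (j : ℕ) (hj : j + 1 < k) (t : ℝ), t ∈ Set.Icc (0 : ℝ) 1 →
      ‖x - ((1 - t) • xh ⟨j, Nat.lt_of_succ_lt hj⟩ + t • xh ⟨j + 1, hj⟩)‖ ≤ η →
      ∀ h : Fin M, l h < ‖x - o h‖ := by
  intro x j hj t ht hx h
  obtain ⟨ht0, ht1⟩ := ht
  set a := xh ⟨j, Nat.lt_of_succ_lt hj⟩ with ha_def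
  set b := xh ⟨j + 1, hj⟩ with hb_def
  set p := (1 - t) • a + t • b with hp_def
  have hpo : p - o h = (1 - t) • (a - o h) + t • (b - o h) := by
    simp only [hp_def, smul_sub]
    module
  have hkey : ‖p - o h‖ ^ 2
      = (1 - t) * ‖a - o h‖ ^ 2 + t * ‖b - o h‖ ^ 2
        - t * (1 - t) * ‖b - a‖ ^ 2 := by
    rw [hpo, seg_norm_sq_aux, sub_sub_sub_cancel_right]
  have hpgt : l h + η < ‖p - o h‖ :=
    arith_aux (l h) η η' Δx ‖a - o h‖ ‖b - o h‖ ‖b - a‖ ‖p - o h‖ t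
      (hl h) hη hηη' hΔx (hclear _ h) (hclear _ h) (norm_nonneg _)
      (hstep j hj) (norm_nonneg _) (hbound h) ht0 ht1 hkey
  have htri : ‖p - o h‖ ≤ ‖p - x‖ + ‖x - o h‖ := norm_sub_le_norm_sub_add_norm_sub p x (o h)
  have hxp : ‖p - x‖ ≤ η := by
    rw [← norm_neg]; simpa [neg_sub] using hx
  linarith
end

section
/- Let N ≥ 1 be a natural number, let s : Fin N → ℝ be a finite family of real scores, let α ∈ (0,1) be a real number, let m := ⌈(1 − α)·N⌉, and let Δ := sup{δ ∈ ℝ : the number of indices i with s i ≥ δ is at least m}. Then the number of indices i with s i < Δ is at most α·N; that is, the fraction of calibration scores falling strictly below the calibrated threshold is at most α. -/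
/-- With `m = ⌈(1 − α)·N⌉` and `Δ = sup{δ : |{i : s i ≥ δ}| ≥ m}`, at most an
`α` fraction of the calibration scores fall strictly below `Δ`. -/
theorem calibration_false_positive_rate_le_alpha
    (N : ℕ) (hN : 1 ≤ N) (s : Fin N → ℝ) (α : ℝ) (hα : α ∈ Set.Ioo (0 : ℝ) 1) :
    ({i : Fin N | s i <
        sSup {δ : ℝ | ⌈(1 - α) * N⌉₊ ≤ {j : Fin N | δ ≤ s j}.ncard}}.ncard : ℝ)
      ≤ α * N := by
  obtain ⟨hα0, hα1⟩ := hα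
  set m : ℕ := ⌈(1 - α) * N⌉₊ with hm
  set S : Set ℝ := {δ : ℝ | m ≤ {j : Fin N | δ ≤ s j}.ncard} with hS
  set Δ : ℝ := sSup S with hΔ
  have hNpos : (0:ℝ) < N := by exact_mod_cast hN
  have hne : Nonempty (Fin N) := ⟨⟨0, hN⟩⟩
  have hm1 : 1 ≤ m := Nat.one_le_ceil_iff.mpr (by nlinarith)
  have hmN : m ≤ N := Nat.ceil_le.mpr (by nlinarith)
  have hcard : ∀ δ : ℝ, ({j : Fin N | δ ≤ s j} : Set (Fin N)).ncard ≤ N := by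
    intro δ
    have := Set.ncard_le_ncard (Set.subset_univ {j : Fin N | δ ≤ s j}) Set.finite_univ
    simpa [Set.ncard_univ, Nat.card_eq_fintype_card] using this
  -- S is nonempty
  obtain ⟨i₀, _, hmin⟩ := Finset.exists_min_image Finset.univ s
    ⟨⟨0, hN⟩, Finset.mem_univ _⟩
  have hSne : S.Nonempty := by
    refine ⟨s i₀, ?_⟩
    have : {j : Fin N | s i₀ ≤ s j} = Set.univ := by
      ext j; simp [hmin j (Finset.mem_univ j)]
    simp only [hS, Set.mem_setOf_eq, this, Set.ncard_univ, Nat.card_eq_fintype_card,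
      Fintype.card_fin]
    exact hmN
  -- S is bounded above
  obtain ⟨i₁, _, hmax⟩ := Finset.exists_max_image Finset.univ s
    ⟨⟨0, hN⟩, Finset.mem_univ _⟩
  have hbdd : BddAbove S := by
    refine ⟨s i₁, fun δ hδ => ?_⟩
    have hpos : 0 < ({j : Fin N | δ ≤ s j} : Set (Fin N)).ncard := lt_of_lt_of_le hm1 hδ
    obtain ⟨j, hj⟩ := Set.nonempty_of_ncard_ne_zero hpos.ne'
    exact le_trans hj (hmax j (Finset.mem_univ j))
  -- key: Δ itself satisfies the count condition
  have hΔS : m ≤ ({j : Fin N | Δ ≤ s j} : Set (Fin N)).ncard := by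
    by_cases hF : ∃ j, s j < Δ
    · obtain ⟨j₀, _, hj₀max⟩ := Finset.exists_max_image
        (Finset.univ.filter (fun j => s j < Δ)) s
        (by obtain ⟨j, hj⟩ := hF; exact ⟨j, by simp [hj]⟩)
      have hj₀lt : s j₀ < Δ := by
        have := Finset.mem_filter.mp ‹j₀ ∈ _›
        exact this.2
      obtain ⟨δ, hδS, hlt⟩ := exists_lt_of_lt_csSup hSne hj₀lt
      have hsub : {j : Fin N | δ ≤ s j} ⊆ {j : Fin N | Δ ≤ s j} := by
        intro j hj
        by_contra hjc
        have hjF : s j < Δ := lt_of_not_ge hjc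
        have : s j ≤ s j₀ := hj₀max j (Finset.mem_filter.mpr ⟨Finset.mem_univ j, hjF⟩)
        exact absurd (le_trans hj this) (not_le.mpr hlt)
      exact le_trans hδS (Set.ncard_le_ncard hsub (Set.toFinite _))
    · push_neg at hF
      have : {j : Fin N | Δ ≤ s j} = Set.univ := by
        ext j; simp [hF j]
      simp only [this, Set.ncard_univ, Nat.card_eq_fintype_card, Fintype.card_fin]
      exact hmN
  -- complement computation
  have hcompl : ({i : Fin N | s i < Δ} : Set (Fin N)) = {j : Fin N | Δ ≤ s j}ᶜ := by
    ext i; simp [not_le]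
  have hsum : ({j : Fin N | Δ ≤ s j} : Set (Fin N)).ncard
      + ({j : Fin N | Δ ≤ s j}ᶜ : Set (Fin N)).ncard = N := by
    rw [Set.ncard_add_ncard_compl]
    simp [Nat.card_eq_fintype_card]
  have hle : ({i : Fin N | s i < Δ} : Set (Fin N)).ncard ≤ N - m := by
    rw [hcompl]
    omega
  have hmle : ((1 - α) * N : ℝ) ≤ m := Nat.le_ceil _
  calc (({i : Fin N | s i < Δ} : Set (Fin N)).ncard : ℝ) ≤ ((N - m : ℕ) : ℝ) := by
        exact_mod_cast hle
    _ = (N : ℝ) - m := by push_cast [hmN]; ring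
    _ ≤ α * N := by nlinarith
end
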